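/- Let L be a 2-dimensional ℚ-subspace of ℚ⁴ with Λ = L ∩ ℤ⁴ and D = disc(L), and assume D mod 16 ∉ {0, 7, 12, 15} and that n = v₂(D) ≥ 1. Then the subgroup of elements of 2-power order of the glue group 𝒢(Λ) = Λ*/Λ is isomorphic, as an abelian group, to (ℤ/2ℤ) × (ℤ/2^{n−1}ℤ). -/

import Mathlib

/-- The standard inner product on `ℚ⁴`. -/
def innerQ4 (x y : Fin 4 → ℚ) : ℚ := ∑ i, x i * y i

/-- A vector of `ℚ⁴` lies in `ℤ⁴`. -/
def IsIntVec (x : Fin 4 → ℚ) : Prop := ∀ i, ∃ n : ℤ, x i = n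

theorem IsIntVec.add {x y : Fin 4 → ℚ} (hx : IsIntVec x) (hy : IsIntVec y) :
    IsIntVec (x + y) := by
  intro i
  obtain ⟨m, hm⟩ := hx i
  obtain ⟨n, hn⟩ := hy i
  exact ⟨m + n, by simp [hm, hn]⟩

theorem IsIntVec.neg {x : Fin 4 → ℚ} (hx : IsIntVec x) : IsIntVec (-x) := by
  intro i
  obtain ⟨m, hm⟩ := hx i
  exact ⟨-m, by simp [hm]⟩

theorem IsIntVec.zero : IsIntVec (0 : Fin 4 → ℚ) := fun _ => ⟨0, by simp⟩

/-- `(v₁, v₂)` is a `ℤ`-basis of the lattice `L ∩ ℤ⁴`. -/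
def IsZBasisOf (L : Submodule ℚ (Fin 4 → ℚ)) (v₁ v₂ : Fin 4 → ℚ) : Prop :=
  v₁ ∈ L ∧ v₂ ∈ L ∧ IsIntVec v₁ ∧ IsIntVec v₂ ∧ LinearIndependent ℚ ![v₁, v₂] ∧
    ∀ x ∈ L, IsIntVec x → ∃ m n : ℤ, x = (m : ℚ) • v₁ + (n : ℚ) • v₂

/-- The determinant of the Gram matrix of the pair `(v₁, v₂)` with respect to the standard
inner product. -/
def gramDet (v₁ v₂ : Fin 4 → ℚ) : ℚ :=
  innerQ4 v₁ v₁ * innerQ4 v₂ v₂ - innerQ4 v₁ v₂ ^ 2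

/-- The lattice `Λ = L ∩ ℤ⁴`, as an additive subgroup of `ℚ⁴`. -/
def latticeIn (L : Submodule ℚ (Fin 4 → ℚ)) : AddSubgroup (Fin 4 → ℚ) where
  carrier := {x | x ∈ L ∧ IsIntVec x}
  add_mem' := by
    rintro x y ⟨hxL, hx⟩ ⟨hyL, hy⟩
    exact ⟨L.add_mem hxL hyL, hx.add hy⟩
  zero_mem' := ⟨L.zero_mem, IsIntVec.zero⟩
  neg_mem' := by
    rintro x ⟨hxL, hx⟩
    exact ⟨L.neg_mem hxL, hx.neg⟩

/-- The dual lattice `Λ* = {x ∈ L : ⟨x, w⟩ ∈ ℤ for all w ∈ Λ}`, as an additive subgroup of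
`ℚ⁴`. -/
def dualLatticeIn (L : Submodule ℚ (Fin 4 → ℚ)) : AddSubgroup (Fin 4 → ℚ) where
  carrier := {x | x ∈ L ∧ ∀ w ∈ latticeIn L, ∃ m : ℤ, innerQ4 x w = m}
  add_mem' := by
    rintro x y ⟨hxL, hx⟩ ⟨hyL, hy⟩
    refine ⟨L.add_mem hxL hyL, fun w hw => ?_⟩
    obtain ⟨m, hm⟩ := hx w hw
    obtain ⟨n, hn⟩ := hy w hw
    refine ⟨m + n, ?_⟩
    simp only [innerQ4, Pi.add_apply, add_mul, Finset.sum_add_distrib] at *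
    rw [hm, hn]; push_cast; ring
  zero_mem' := ⟨L.zero_mem, fun w _ => ⟨0, by simp [innerQ4]⟩⟩
  neg_mem' := by
    rintro x ⟨hxL, hx⟩
    refine ⟨L.neg_mem hxL, fun w hw => ?_⟩
    obtain ⟨m, hm⟩ := hx w hw
    refine ⟨-m, ?_⟩
    simp only [innerQ4, Pi.neg_apply, neg_mul, Finset.sum_neg_distrib] at *
    rw [hm]; push_cast; ring
  
/-- The glue group `𝒢(Λ) = Λ*/Λ` of the lattice `Λ = L ∩ ℤ⁴`. -/
def glueGroup (L : Submodule ℚ (Fin 4 → ℚ)) : Type :=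
  ↥(dualLatticeIn L) ⧸ (latticeIn L).addSubgroupOf (dualLatticeIn L)

noncomputable instance (L : Submodule ℚ (Fin 4 → ℚ)) : AddCommGroup (glueGroup L) :=
  QuotientAddGroup.Quotient.addCommGroup _


namespace S17

def dotZ (f g : Fin 4 → ℤ) : ℤ := ∑ i, f i * g i

lemma dotZ_comm (f g : Fin 4 → ℤ) : dotZ f g = dotZ g f := by
  unfold dotZ; exact Finset.sum_congr rfl fun i _ => mul_comm _ _

lemma sq4_odd {x : ℤ} (h : ¬ (2:ℤ) ∣ x) : ∃ k, x^2 = 4*k+1 := by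
  obtain ⟨q, hq⟩ : ∃ q, x = 2*q+1 := ⟨x/2, by omega⟩
  subst hq
  exact ⟨q*q + q, by ring⟩

lemma sq4_even {x : ℤ} (h : (2:ℤ) ∣ x) : ∃ k, x^2 = 4*k := by
  obtain ⟨q, rfl⟩ := h; exact ⟨q*q, by ring⟩

lemma L2'' (w x y z : ℤ) (h4 : 4 ∣ (w^2+x^2+y^2+z^2)) (hw : ¬ (2:ℤ)∣w) (hx : (2:ℤ)∣x) :
    False := by
  obtain ⟨kw, ew⟩ := sq4_odd hw
  obtain ⟨kx, ex⟩ := sq4_even hx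
  rcases em ((2:ℤ)∣y) with hy|hy
  · obtain ⟨ky, ey⟩ := sq4_even hy
    rcases em ((2:ℤ)∣z) with hz|hz
    · obtain ⟨kz, ez⟩ := sq4_even hz; rw [ew,ex,ey,ez] at h4; omega
    · obtain ⟨kz, ez⟩ := sq4_odd hz; rw [ew,ex,ey,ez] at h4; omega
  · obtain ⟨ky, ey⟩ := sq4_odd hy
    rcases em ((2:ℤ)∣z) with hz|hz
    · obtain ⟨kz, ez⟩ := sq4_even hz; rw [ew,ex,ey,ez] at h4; omega
    · obtain ⟨kz, ez⟩ := sq4_odd hz; rw [ew,ex,ey,ez] at h4; omega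

lemma L2 (w x y z : ℤ) (h4 : 4 ∣ (w^2+x^2+y^2+z^2)) (hw : ¬ (2:ℤ)∣w) :
    ¬(2:ℤ)∣x ∧ ¬(2:ℤ)∣y ∧ ¬(2:ℤ)∣z :=
  ⟨fun h => L2'' w x y z h4 hw h,
   fun h => L2'' w y x z (by rw [show w^2+y^2+x^2+z^2 = w^2+x^2+y^2+z^2 by ring]; exact h4) hw h,
   fun h => L2'' w z x y (by rw [show w^2+z^2+x^2+y^2 = w^2+x^2+y^2+z^2 by ring]; exact h4) hw h⟩

lemma dot_sq_sum (g : Fin 4 → ℤ) : dotZ g g = g 0^2 + g 1^2 + g 2^2 + g 3^2 := by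
  simp [dotZ, Fin.sum_univ_four, pow_two]

lemma odd_all (g : Fin 4 → ℤ) (h4 : 4 ∣ dotZ g g) (h0 : ∃ i, ¬ (2:ℤ) ∣ g i) :
    ∀ i, ¬ (2:ℤ) ∣ g i := by
  rw [dot_sq_sum] at h4
  obtain ⟨i0, hi0⟩ := h0
  have key : ¬(2:ℤ)∣g 0 ∧ ¬(2:ℤ)∣g 1 ∧ ¬(2:ℤ)∣g 2 ∧ ¬(2:ℤ)∣g 3 := by
    fin_cases i0
    · obtain ⟨h1,h2,h3⟩ := L2 (g 0) (g 1) (g 2) (g 3) h4 hi0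
      exact ⟨hi0, h1, h2, h3⟩
    · obtain ⟨h1,h2,h3⟩ := L2 (g 1) (g 0) (g 2) (g 3)
        (by rw [show (g 1)^2+(g 0)^2+(g 2)^2+(g 3)^2 = (g 0)^2+(g 1)^2+(g 2)^2+(g 3)^2 by ring]; exact h4) hi0
      exact ⟨h1, hi0, h2, h3⟩
    · obtain ⟨h1,h2,h3⟩ := L2 (g 2) (g 0) (g 1) (g 3)
        (by rw [show (g 2)^2+(g 0)^2+(g 1)^2+(g 3)^2 = (g 0)^2+(g 1)^2+(g 2)^2+(g 3)^2 by ring]; exact h4) hi0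
      exact ⟨h1, h2, hi0, h3⟩
    · obtain ⟨h1,h2,h3⟩ := L2 (g 3) (g 0) (g 1) (g 2)
        (by rw [show (g 3)^2+(g 0)^2+(g 1)^2+(g 2)^2 = (g 0)^2+(g 1)^2+(g 2)^2+(g 3)^2 by ring]; exact h4) hi0
      exact ⟨h1, h2, h3, hi0⟩
  intro i; fin_cases i <;> tauto

lemma L1 (f g : Fin 4 → ℤ) (hg : ∀ i, ¬ (2:ℤ) ∣ g i) : 2 ∣ dotZ f g - dotZ f f := by
  unfold dotZ
  rw [← Finset.sum_sub_distrib]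
  refine Finset.dvd_sum fun i _ => ?_
  rcases em ((2:ℤ) ∣ f i) with h|h
  · obtain ⟨k, hk⟩ := h
    exact ⟨k*g i - k*f i, by rw [hk]; ring⟩
  · have h2 : (2:ℤ) ∣ g i - f i := by have := hg i; omega
    obtain ⟨k, hk⟩ := h2
    have hgi : g i = f i + 2*k := by omega
    exact ⟨f i * k, by rw [hgi]; ring⟩

lemma dotZ_add_right (f g h : Fin 4 → ℤ) :
    dotZ f (fun i => g i + h i) = dotZ f g + dotZ f h := by
  unfold dotZ
  rw [← Finset.sum_add_distrib]
  exact Finset.sum_congr rfl fun i _ => by ring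

lemma dotZ_add_left (f g h : Fin 4 → ℤ) :
    dotZ (fun i => f i + g i) h = dotZ f h + dotZ g h := by
  unfold dotZ
  rw [← Finset.sum_add_distrib]
  exact Finset.sum_congr rfl fun i _ => by ring

lemma Hfalse (f g : Fin 4 → ℤ) (h4 : 4 ∣ dotZ f f * dotZ g g - (dotZ f g)^2)
    (hB : (2:ℤ) ∣ dotZ f g) (hA : ¬ (2:ℤ) ∣ dotZ f f) (hg0 : ∃ i, ¬ (2:ℤ) ∣ g i) : False := by
  have h4B : (4:ℤ) ∣ dotZ f g ^ 2 := by
    obtain ⟨k, hk⟩ := hB; exact ⟨k^2, by rw [hk]; ring⟩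
  have hAC : (4:ℤ) ∣ dotZ f f * dotZ g g := by
    have := dvd_add h4 h4B; rwa [sub_add_cancel] at this
  have hC : (2:ℤ) ∣ dotZ g g :=
    (Int.prime_two.dvd_mul.mp (dvd_trans (by norm_num) hAC)).resolve_left hA
  obtain ⟨C0, hC0⟩ := hC
  obtain ⟨k, hk⟩ := hAC
  have h5 : (2:ℤ) * (dotZ f f * C0) = 2 * (2*k) := by
    rw [hC0] at hk; linarith [hk]
  have hC0' : (2:ℤ) ∣ dotZ f f * C0 := ⟨k, mul_left_cancel₀ two_ne_zero h5⟩
  have h7 : (2:ℤ) ∣ C0 := (Int.prime_two.dvd_mul.mp hC0').resolve_left hA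
  obtain ⟨C1, h8⟩ := h7
  have hC4 : (4:ℤ) ∣ dotZ g g := ⟨C1, by rw [hC0, h8]; ring⟩
  have hall := odd_all g hC4 hg0
  have hBA := L1 f g hall
  exact hA (by omega)

lemma hard_claim (e₁ e₂ : Fin 4 → ℤ)
    (hprim : ∀ s t : ℤ, (∀ i, (2:ℤ) ∣ s * e₁ i + t * e₂ i) → (2:ℤ) ∣ s ∧ (2:ℤ) ∣ t)
    (h4 : 4 ∣ dotZ e₁ e₁ * dotZ e₂ e₂ - (dotZ e₁ e₂)^2) :
    (2:ℤ) ∣ dotZ e₁ e₁ ∧ (2:ℤ) ∣ dotZ e₁ e₂ ∧ (2:ℤ) ∣ dotZ e₂ e₂ := by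
  set a := dotZ e₁ e₁ with ha
  set b := dotZ e₁ e₂ with hbdef
  set c := dotZ e₂ e₂ with hc
  have hg2 : ∃ i, ¬ (2:ℤ) ∣ e₂ i := by
    by_contra h; push_neg at h
    have := (hprim 0 1 (fun i => by simpa using h i)).2
    omega
  have hg1 : ∃ i, ¬ (2:ℤ) ∣ e₁ i := by
    by_contra h; push_neg at h
    have := (hprim 1 0 (fun i => by simpa using h i)).1
    omega
  have hg12 : ∃ i, ¬ (2:ℤ) ∣ e₁ i + e₂ i := by
    by_contra h; push_neg at h
    have := hprim 1 1 (fun i => by simpa using h i)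
    omega
  have hb : (2:ℤ) ∣ b := by
    by_contra hb
    have hD2 : (2:ℤ) ∣ a*c - b^2 := dvd_trans (by norm_num) h4
    have hA : ¬ (2:ℤ) ∣ a := by
      intro haa
      have h1 : (2:ℤ) ∣ a*c := Dvd.dvd.mul_right haa c
      have h2 : (2:ℤ) ∣ b^2 := by omega
      exact hb (Int.prime_two.dvd_of_dvd_pow h2)
    have hd1 : dotZ e₁ (fun i => e₁ i + e₂ i) = a + b := by
      rw [dotZ_add_right]
    have hd2 : dotZ (fun i => e₁ i + e₂ i) (fun i => e₁ i + e₂ i) = a + 2*b + c := by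
      rw [dotZ_add_right, dotZ_add_left, dotZ_add_left, dotZ_comm e₂ e₁]
      ring
    refine Hfalse e₁ (fun i => e₁ i + e₂ i) ?_ ?_ hA hg12
    · rw [hd1, hd2, ha]
      have : a * (a + 2*b + c) - (a+b)^2 = a*c - b^2 := by ring
      rw [this]; exact h4
    · rw [hd1]
      have hA' : ¬ (2:ℤ) ∣ a := hA
      -- a odd, b odd → a + b even
      omega
  have haa : (2:ℤ) ∣ a := by
    by_contra hA
    exact Hfalse e₁ e₂ h4 hb hA hg2
  have hcc : (2:ℤ) ∣ c := by
    by_contra hC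
    refine Hfalse e₂ e₁ ?_ ?_ hC hg1
    · rw [dotZ_comm e₂ e₁]
      have : c * a - b^2 = a*c - b^2 := by ring
      rw [← ha, ← hbdef, ← hc] at *
      rw [this]; exact h4
    · rw [dotZ_comm e₂ e₁]; exact hb
  exact ⟨haa, hb, hcc⟩

-- decide lemmas for the kernel computations
lemma T1 : ∀ A B C U W : ZMod 2, A*C - B^2 = 0 →
    ((C*U - B*W = 0 ∧ A*W - B*U = 0) ↔ C*U + A*W = 0) := by decide

lemma T2 : ∀ A B C U W : ZMod 2, A*C - B^2 = 1 →
    ((C*U - B*W = 0 ∧ A*W - B*U = 0) ↔ (U = 0 ∧ W = 0)) := by decide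

set_option maxRecDepth 40000 in
lemma T3 : ∀ A B C U W : ZMod 4, 2*A ≠ 0 → A*C - B^2 = 2 →
    ((C*U - B*W = 0 ∧ A*W - B*U = 0) ↔ (2*U = 0 ∧ W - A*B*U = 0)) := by decide

end S17
namespace S17

lemma innerQ4_add_left (x y z : Fin 4 → ℚ) :
    innerQ4 (x + y) z = innerQ4 x z + innerQ4 y z := by
  unfold innerQ4
  rw [← Finset.sum_add_distrib]
  exact Finset.sum_congr rfl fun i _ => by simp [add_mul]

lemma innerQ4_smul_left (r : ℚ) (x z : Fin 4 → ℚ) :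
    innerQ4 (r • x) z = r * innerQ4 x z := by
  unfold innerQ4
  rw [Finset.mul_sum]
  exact Finset.sum_congr rfl fun i _ => by simp [mul_assoc]

lemma innerQ4_comm (x y : Fin 4 → ℚ) : innerQ4 x y = innerQ4 y x := by
  unfold innerQ4
  exact Finset.sum_congr rfl fun i _ => mul_comm _ _

lemma innerQ4_comb_left (α β : ℚ) (v w z : Fin 4 → ℚ) :
    innerQ4 (α • v + β • w) z = α * innerQ4 v z + β * innerQ4 w z := by
  rw [innerQ4_add_left, innerQ4_smul_left, innerQ4_smul_left]

lemma innerQ4_comb_right (α β : ℚ) (v w z : Fin 4 → ℚ) :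
    innerQ4 z (α • v + β • w) = α * innerQ4 z v + β * innerQ4 z w := by
  rw [innerQ4_comm, innerQ4_comb_left, innerQ4_comm v z, innerQ4_comm w z]

lemma lin_indep_coeffs {v₁ v₂ : Fin 4 → ℚ} (hli : LinearIndependent ℚ ![v₁, v₂]) :
    ∀ α β : ℚ, α • v₁ + β • v₂ = 0 → α = 0 ∧ β = 0 := by
  intro α β h
  have := Fintype.linearIndependent_iff.mp hli ![α, β]
    (by rw [Fin.sum_univ_two]; simpa using h)
  exact ⟨this 0, this 1⟩

lemma spanL {L : Submodule ℚ (Fin 4 → ℚ)} {v₁ v₂ : Fin 4 → ℚ}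
    (hdim : Module.finrank ℚ L = 2) (h1 : v₁ ∈ L) (h2 : v₂ ∈ L)
    (hli : LinearIndependent ℚ ![v₁, v₂]) :
    ∀ x ∈ L, ∃ α β : ℚ, x = α • v₁ + β • v₂ := by
  intro x hx
  set u : Fin 2 → ↥L := ![⟨v₁, h1⟩, ⟨v₂, h2⟩] with hu
  have hcomp : (⇑L.subtype ∘ u) = ![v₁, v₂] := by
    funext i; fin_cases i <;> rfl
  have liu : LinearIndependent ℚ u :=
    LinearIndependent.of_comp L.subtype (by rwa [hcomp])
  let B := basisOfLinearIndependentOfCardEqFinrank liu (by simp [hdim])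
  have hB : ⇑B = u := coe_basisOfLinearIndependentOfCardEqFinrank liu _
  have hrepr := B.sum_repr ⟨x, hx⟩
  rw [Fin.sum_univ_two] at hrepr
  refine ⟨B.repr ⟨x, hx⟩ 0, B.repr ⟨x, hx⟩ 1, ?_⟩
  have := congrArg (Subtype.val) hrepr
  simp only [Submodule.coe_add, SetLike.val_smul, hB, hu] at this
  simp only [Matrix.cons_val_zero, Matrix.cons_val_one, Matrix.head_cons] at this
  exact this.symm

lemma prim {L : Submodule ℚ (Fin 4 → ℚ)} {v₁ v₂ : Fin 4 → ℚ}
    (hbasis : IsZBasisOf L v₁ v₂) (e₁ e₂ : Fin 4 → ℤ)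
    (he₁ : ∀ i, v₁ i = (e₁ i : ℚ)) (he₂ : ∀ i, v₂ i = (e₂ i : ℚ)) :
    ∀ s t : ℤ, (∀ i, (2:ℤ) ∣ s * e₁ i + t * e₂ i) → (2:ℤ) ∣ s ∧ (2:ℤ) ∣ t := by
  obtain ⟨h1, h2, hint1, hint2, hli, hgen⟩ := hbasis
  intro s t hyp
  choose k hk using hyp
  set x : Fin 4 → ℚ := fun i => (k i : ℚ) with hxdef
  have hxeq : x = ((s:ℚ)/2) • v₁ + ((t:ℚ)/2) • v₂ := by
    funext i
    simp only [hxdef, Pi.add_apply, Pi.smul_apply, smul_eq_mul, he₁ i, he₂ i]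
    have hq : ((s:ℚ)) * (e₁ i : ℚ) + (t:ℚ) * (e₂ i : ℚ) = 2 * (k i : ℚ) := by
      exact_mod_cast hk i
    linear_combination (-1/2 : ℚ) * hq
  have hxL : x ∈ L := by
    rw [hxeq]; exact L.add_mem (L.smul_mem _ h1) (L.smul_mem _ h2)
  have hxint : IsIntVec x := fun i => ⟨k i, rfl⟩
  obtain ⟨m, n, hmn⟩ := hgen x hxL hxint
  have heq2 : ((s:ℚ)/2) • v₁ + ((t:ℚ)/2) • v₂ = (m:ℚ) • v₁ + (n:ℚ) • v₂ := by
    rw [← hxeq]; exact hmn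
  have h0 : ((s:ℚ)/2 - (m:ℚ)) • v₁ + ((t:ℚ)/2 - (n:ℚ)) • v₂ = 0 := by
    rw [sub_smul, sub_smul]
    rw [show ((s:ℚ)/2) • v₁ - (m:ℚ) • v₁ + (((t:ℚ)/2) • v₂ - (n:ℚ) • v₂)
        = (((s:ℚ)/2) • v₁ + ((t:ℚ)/2) • v₂) - ((m:ℚ) • v₁ + (n:ℚ) • v₂) by abel]
    rw [heq2, sub_self]
  obtain ⟨hs, ht⟩ := lin_indep_coeffs hli _ _ h0
  constructor
  · refine ⟨m, ?_⟩
    have : (s:ℚ) = 2 * (m:ℚ) := by linear_combination 2 * hs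
    exact_mod_cast this
  · refine ⟨n, ?_⟩
    have : (t:ℚ) = 2 * (n:ℚ) := by linear_combination 2 * ht
    exact_mod_cast this

end S17
namespace S17

def ival (v x : Fin 4 → ℚ) : ℤ := (innerQ4 x v).num

lemma ival_spec {x v : Fin 4 → ℚ} (h : ∃ k : ℤ, innerQ4 x v = k) :
    ((ival v x : ℤ) : ℚ) = innerQ4 x v := by
  obtain ⟨k, hk⟩ := h; rw [ival, hk]; simp

lemma core (L : Submodule ℚ (Fin 4 → ℚ)) (hdim : Module.finrank ℚ L = 2)
    (v₁ v₂ : Fin 4 → ℚ) (hbasis : IsZBasisOf L v₁ v₂)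
    (a b c : ℤ)
    (hia : innerQ4 v₁ v₁ = (a:ℚ)) (hib : innerQ4 v₁ v₂ = (b:ℚ)) (hic : innerQ4 v₂ v₂ = (c:ℚ))
    (n : ℕ) (hn1 : 1 ≤ n) (m m' : ℤ)
    (hm : a*c - b^2 = 2^n * m) (hmodd : ¬ (2:ℤ) ∣ m) (hm' : (2:ℤ)^n ∣ m * m' - 1)
    (s t p q : ℤ)
    (hker : ∀ u w : ℤ, ((2:ℤ)^n ∣ c*u - b*w ∧ (2:ℤ)^n ∣ a*w - b*u) ↔
       ((2:ℤ) ∣ s*u + t*w ∧ (2:ℤ)^(n-1) ∣ p*u + q*w))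
    (hsurj : ∀ z₁ z₂ : ℤ, ∃ u w : ℤ,
       (2:ℤ) ∣ s*u + t*w - z₁ ∧ (2:ℤ)^(n-1) ∣ p*u + q*w - z₂) :
    Nonempty ((AddCommGroup.primaryComponent (glueGroup L) 2) ≃+
      (ZMod 2 × ZMod (2 ^ (n - 1)))) := by
  haveI : NeZero (2 ^ (n-1)) := ⟨pow_ne_zero _ (by norm_num)⟩
  obtain ⟨hv1L, hv2L, hv1I, hv2I, hli, hgen⟩ := hbasis
  have hv1Lat : v₁ ∈ latticeIn L := ⟨hv1L, hv1I⟩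
  have hv2Lat : v₂ ∈ latticeIn L := ⟨hv2L, hv2I⟩
  -- basic facts about m and D
  have hm0 : m ≠ 0 := fun h => hmodd (h ▸ dvd_zero 2)
  have hDz : a*c - b^2 ≠ 0 := by
    rw [hm]; exact mul_ne_zero (pow_ne_zero _ (by norm_num)) hm0
  have hΔ : ((a:ℚ)*c - (b:ℚ)^2) ≠ 0 := by
    intro h; apply hDz; exact_mod_cast h
  have hco : IsCoprime (2:ℤ) m := by
    obtain ⟨l, hl⟩ : ∃ l, m = 2*l+1 := ⟨m/2, by omega⟩
    exact ⟨-l, 1, by rw [hl]; ring⟩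
  have hm'odd : ¬ (2:ℤ) ∣ m' := by
    intro h
    have h2n : (2:ℤ) ∣ 2^n := dvd_pow_self 2 (by omega)
    have h1 : (2:ℤ) ∣ m * m' - 1 := dvd_trans h2n hm'
    have h2 : (2:ℤ) ∣ m * m' := Dvd.dvd.mul_left h m
    omega
  -- integer values of inner products with v₁, v₂ for dual vectors
  have hU : ∀ x ∈ dualLatticeIn L, ((ival v₁ x : ℤ) : ℚ) = innerQ4 x v₁ :=
    fun x hx => ival_spec (hx.2 v₁ hv1Lat)
  have hW : ∀ x ∈ dualLatticeIn L, ((ival v₂ x : ℤ) : ℚ) = innerQ4 x v₂ :=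
    fun x hx => ival_spec (hx.2 v₂ hv2Lat)
  -- representation of elements of L by their inner products
  have repr' : ∀ x ∈ L,
      x = (((c:ℚ) * innerQ4 x v₁ - (b:ℚ) * innerQ4 x v₂)/((a:ℚ)*c - (b:ℚ)^2)) • v₁
        + (((a:ℚ) * innerQ4 x v₂ - (b:ℚ) * innerQ4 x v₁)/((a:ℚ)*c - (b:ℚ)^2)) • v₂ := by
    intro x hx
    obtain ⟨α, β, rfl⟩ := spanL hdim hv1L hv2L hli x hx
    rw [innerQ4_comb_left, innerQ4_comb_left, innerQ4_comm v₂ v₁, hia, hib, hic]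
    have e1 : ((c:ℚ) * (α * a + β * b) - (b:ℚ) * (α * b + β * c))/((a:ℚ)*c - (b:ℚ)^2) = α := by
      rw [div_eq_iff hΔ]; ring
    have e2 : ((a:ℚ) * (α * b + β * c) - (b:ℚ) * (α * a + β * b))/((a:ℚ)*c - (b:ℚ)^2) = β := by
      rw [div_eq_iff hΔ]; ring
    rw [e1, e2]
  -- construction of dual vectors with prescribed inner products
  have dual_of : ∀ u w : ℤ, ∃ x, x ∈ dualLatticeIn L ∧
      innerQ4 x v₁ = (u:ℚ) ∧ innerQ4 x v₂ = (w:ℚ) := by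
    intro u w
    set x := (((c*u - b*w : ℤ) : ℚ)/((a:ℚ)*c - (b:ℚ)^2)) • v₁
      + (((a*w - b*u : ℤ) : ℚ)/((a:ℚ)*c - (b:ℚ)^2)) • v₂ with hxdef
    have hxL : x ∈ L := L.add_mem (L.smul_mem _ hv1L) (L.smul_mem _ hv2L)
    have h1 : innerQ4 x v₁ = (u:ℚ) := by
      rw [hxdef, innerQ4_comb_left, hia, innerQ4_comm v₂ v₁, hib]
      push_cast
      rw [div_mul_eq_mul_div, div_mul_eq_mul_div, ← add_div, div_eq_iff hΔ]
      ring
    have h2 : innerQ4 x v₂ = (w:ℚ) := by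
      rw [hxdef, innerQ4_comb_left, hib, hic]
      push_cast
      rw [div_mul_eq_mul_div, div_mul_eq_mul_div, ← add_div, div_eq_iff hΔ]
      ring
    refine ⟨x, ⟨hxL, ?_⟩, h1, h2⟩
    intro wv hwv
    obtain ⟨m₂, n₂, hwv'⟩ := hgen wv hwv.1 hwv.2
    refine ⟨m₂ * u + n₂ * w, ?_⟩
    rw [hwv', innerQ4_comb_right, h1, h2]
    push_cast
    ring
  -- characterization of lattice membership for dual vectors
  have lat_of : ∀ x, (hx : x ∈ dualLatticeIn L) →
      ((a*c - b^2) ∣ (c * ival v₁ x - b * ival v₂ x)) →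
      ((a*c - b^2) ∣ (a * ival v₂ x - b * ival v₁ x)) →
      x ∈ latticeIn L := by
    intro x hx hd1 hd2
    obtain ⟨m₁, e1⟩ := hd1
    obtain ⟨n₁, e2⟩ := hd2
    have hxr := repr' x hx.1
    rw [← hU x hx, ← hW x hx] at hxr
    have c1 : ((c:ℚ) * (ival v₁ x :ℚ) - (b:ℚ) * (ival v₂ x :ℚ))/((a:ℚ)*c - (b:ℚ)^2) = (m₁:ℚ) := by
      rw [show (c:ℚ) * (ival v₁ x :ℚ) - (b:ℚ) * (ival v₂ x :ℚ)
          = (((c * ival v₁ x - b * ival v₂ x) : ℤ) : ℚ) by push_cast; ring]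
      rw [e1]
      push_cast
      field_simp
    have c2 : ((a:ℚ) * (ival v₂ x :ℚ) - (b:ℚ) * (ival v₁ x :ℚ))/((a:ℚ)*c - (b:ℚ)^2) = (n₁:ℚ) := by
      rw [show (a:ℚ) * (ival v₂ x :ℚ) - (b:ℚ) * (ival v₁ x :ℚ)
          = (((a * ival v₂ x - b * ival v₁ x) : ℤ) : ℚ) by push_cast; ring]
      rw [e2]
      push_cast
      field_simp
    rw [c1, c2] at hxr
    refine ⟨hx.1, ?_⟩
    intro i
    obtain ⟨k1, hk1⟩ := hv1I i
    obtain ⟨k2, hk2⟩ := hv2I i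
    refine ⟨m₁ * k1 + n₁ * k2, ?_⟩
    rw [hxr]
    simp only [Pi.add_apply, Pi.smul_apply, smul_eq_mul, hk1, hk2]
    push_cast
    ring
  -- inner products of lattice vectors
  have lat_to : ∀ x ∈ latticeIn L, ∃ m₁ n₁ : ℤ,
      innerQ4 x v₁ = ((m₁*a + n₁*b : ℤ) : ℚ) ∧ innerQ4 x v₂ = ((m₁*b + n₁*c : ℤ) : ℚ) := by
    intro x hx
    obtain ⟨m₁, n₁, hx'⟩ := hgen x hx.1 hx.2
    refine ⟨m₁, n₁, ?_, ?_⟩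
    · rw [hx', innerQ4_comb_left, hia, innerQ4_comm v₂ v₁, hib]; push_cast; ring
    · rw [hx', innerQ4_comb_left, hib, hic]; push_cast; ring
  -- casting helpers
  have cast2 : ∀ z : ℤ, ((z : ZMod 2) = 0) ↔ (2:ℤ) ∣ z := by
    intro z; rw [ZMod.intCast_zmod_eq_zero_iff_dvd]; norm_num
  have castp : ∀ z : ℤ, ((z : ZMod (2^(n-1))) = 0) ↔ (2:ℤ)^(n-1) ∣ z := by
    intro z; rw [ZMod.intCast_zmod_eq_zero_iff_dvd]; push_cast; rfl
  -- strip a factor m' from divisibility by powers of two ≤ n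
  have strip : ∀ j : ℕ, j ≤ n → ∀ z : ℤ, (2:ℤ)^j ∣ m' * z → (2:ℤ)^j ∣ z := by
    intro j hj z hd
    have h1 : (2:ℤ)^j ∣ m * (m' * z) := Dvd.dvd.mul_left hd m
    have h2 : (2:ℤ)^j ∣ (m * m' - 1) * z :=
      Dvd.dvd.mul_right (dvd_trans (pow_dvd_pow 2 hj) hm') z
    have h3 := dvd_sub h1 h2
    rwa [show m * (m' * z) - (m * m' - 1) * z = z by ring] at h3
  -- the homomorphism χ
  set N := (latticeIn L).addSubgroupOf (dualLatticeIn L) with hNdef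
  let χ : ↥(dualLatticeIn L) →+ (ZMod 2 × ZMod (2^(n-1))) := AddMonoidHom.mk'
    (fun x => (((m' * (s * ival v₁ x.val + t * ival v₂ x.val) : ℤ) : ZMod 2),
               ((m' * (p * ival v₁ x.val + q * ival v₂ x.val) : ℤ) : ZMod (2^(n-1)))))
    (by
      intro x y
      have hxy : ((x + y : ↥(dualLatticeIn L)) : Fin 4 → ℚ) = (x : Fin 4 → ℚ) + (y : Fin 4 → ℚ) := rfl
      have hmem : ((x : Fin 4 → ℚ) + (y : Fin 4 → ℚ)) ∈ dualLatticeIn L :=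
        (dualLatticeIn L).add_mem x.2 y.2
      have h1 : ival v₁ ((x : Fin 4 → ℚ) + (y : Fin 4 → ℚ)) = ival v₁ x + ival v₁ y := by
        have hq := hU _ hmem
        rw [innerQ4_add_left, ← hU _ x.2, ← hU _ y.2] at hq
        exact_mod_cast hq
      have h2 : ival v₂ ((x : Fin 4 → ℚ) + (y : Fin 4 → ℚ)) = ival v₂ x + ival v₂ y := by
        have hq := hW _ hmem
        rw [innerQ4_add_left, ← hW _ x.2, ← hW _ y.2] at hq
        exact_mod_cast hq
      show (_, _) = _
      rw [hxy, h1, h2]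
      simp only [Prod.mk_add_mk, Prod.mk.injEq]
      constructor <;> (push_cast; ring))

  have hχapp : ∀ x : ↥(dualLatticeIn L),
      χ x = (((m' * (s * ival v₁ x.val + t * ival v₂ x.val) : ℤ) : ZMod 2),
             ((m' * (p * ival v₁ x.val + q * ival v₂ x.val) : ℤ) : ZMod (2^(n-1)))) :=
    fun _ => rfl
  -- χ kills the lattice
  have hkill : N ≤ χ.ker := by
    intro x hx
    have hxlat : x.val ∈ latticeIn L := hx
    obtain ⟨m₁, n₁, h1, h2⟩ := lat_to x.val hxlat
    have e1 : ival v₁ x.val = m₁*a + n₁*b := by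
      have := hU x.val x.2; rw [h1] at this; exact_mod_cast this
    have e2 : ival v₂ x.val = m₁*b + n₁*c := by
      have := hW x.val x.2; rw [h2] at this; exact_mod_cast this
    have hadj1 : (2:ℤ)^n ∣ c * ival v₁ x.val - b * ival v₂ x.val := by
      rw [e1, e2, show c * (m₁*a + n₁*b) - b * (m₁*b + n₁*c) = m₁ * (a*c - b^2) by ring, hm]
      exact ⟨m₁ * m, by ring⟩
    have hadj2 : (2:ℤ)^n ∣ a * ival v₂ x.val - b * ival v₁ x.val := by
      rw [e1, e2, show a * (m₁*b + n₁*c) - b * (m₁*a + n₁*b) = n₁ * (a*c - b^2) by ring, hm]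
      exact ⟨n₁ * m, by ring⟩
    obtain ⟨d1, d2⟩ := (hker _ _).mp ⟨hadj1, hadj2⟩
    show χ x = 0
    rw [hχapp x]
    refine Prod.ext ?_ ?_
    · show ((m' * (s * ival v₁ x.val + t * ival v₂ x.val) : ℤ) : ZMod 2) = 0
      rw [cast2]
      exact Dvd.dvd.mul_left d1 m'
    · show ((m' * (p * ival v₁ x.val + q * ival v₂ x.val) : ℤ) : ZMod (2^(n-1))) = 0
      rw [castp]
      exact Dvd.dvd.mul_left d2 m'
  -- the induced map on the glue group
  have hNnormal : N.Normal := inferInstance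
  let χbar : glueGroup L →+ (ZMod 2 × ZMod (2^(n-1))) := QuotientAddGroup.lift N χ hkill
  let χres : (AddCommGroup.primaryComponent (glueGroup L) 2) →+ (ZMod 2 × ZMod (2^(n-1))) :=
    χbar.comp (AddSubgroup.subtype _)
  refine ⟨AddEquiv.ofBijective χres ⟨?_, ?_⟩⟩
  · -- injectivity
    rw [injective_iff_map_eq_zero]
    intro ξ hξ0
    obtain ⟨x, hxeq⟩ := QuotientAddGroup.mk'_surjective N ξ.val
    obtain ⟨k, hk⟩ := ξ.2
    have h2k : (2:ℕ)^k • ξ.val = 0 := by exact hk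
    rw [← hxeq] at h2k
    have h2k' : QuotientAddGroup.mk' N ((2:ℕ)^k • x) = 0 := by
      rw [map_nsmul]; exact h2k
    have hmemN : ((2:ℕ)^k • x) ∈ N := (QuotientAddGroup.eq_zero_iff _).mp h2k'
    have hmem : ((2:ℕ)^k • x).val ∈ latticeIn L := hmemN
    have hsval : ((2:ℕ)^k • x).val = ((2:ℚ)^k) • x.val := by
      have h' : ((2:ℕ)^k • x).val = (2:ℕ)^k • x.val := rfl
      rw [h', ← Nat.cast_smul_eq_nsmul ℚ]
      push_cast
      rfl
    rw [hsval] at hmem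
    obtain ⟨m₀, n₀, g1, g2⟩ := lat_to _ hmem
    rw [innerQ4_smul_left, ← hU x.val x.2] at g1
    rw [innerQ4_smul_left, ← hW x.val x.2] at g2
    have g1' : 2^k * ival v₁ x.val = m₀*a + n₀*b := by exact_mod_cast g1
    have g2' : 2^k * ival v₂ x.val = m₀*b + n₀*c := by exact_mod_cast g2
    -- χ x = 0
    have hχx : χ x = 0 := by
      have : χres ξ = χbar ξ.val := rfl
      rw [this, ← hxeq] at hξ0
      exact hξ0
    rw [hχapp x] at hχx
    have d1 : (2:ℤ) ∣ m' * (s * ival v₁ x.val + t * ival v₂ x.val) := by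
      have h := congrArg Prod.fst hχx
      exact (cast2 _).mp h
    have d2 : (2:ℤ)^(n-1) ∣ m' * (p * ival v₁ x.val + q * ival v₂ x.val) := by
      have h := congrArg Prod.snd hχx
      exact (castp _).mp h
    have d1' : (2:ℤ) ∣ s * ival v₁ x.val + t * ival v₂ x.val := by
      have h := strip 1 hn1 (s * ival v₁ x.val + t * ival v₂ x.val) (by rwa [pow_one])
      rwa [pow_one] at h
    have d2' : (2:ℤ)^(n-1) ∣ p * ival v₁ x.val + q * ival v₂ x.val :=
      strip (n-1) (by omega) _ d2
    obtain ⟨f1, f2⟩ := (hker _ _).mpr ⟨d1', d2'⟩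
    -- odd part divisibility
    have oddpart : ∀ Z M : ℤ, 2^k * Z = M * (a*c - b^2) → (2:ℤ)^n ∣ Z → (a*c - b^2) ∣ Z := by
      intro Z M hZ hZn
      have hmZ : m ∣ Z := by
        have h1 : m ∣ 2^k * Z := ⟨M * 2^n, by rw [hZ, hm]; ring⟩
        exact (hco.pow_left.symm).dvd_of_dvd_mul_left h1
      obtain ⟨z₀, hz₀⟩ := hmZ
      have h2z : (2:ℤ)^n ∣ m * z₀ := hz₀ ▸ hZn
      have h2z' : (2:ℤ)^n ∣ z₀ := (hco.pow_left).dvd_of_dvd_mul_left h2z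
      obtain ⟨y, hy⟩ := h2z'
      exact ⟨y, by rw [hz₀, hy, hm]; ring⟩
    have D1 : (a*c - b^2) ∣ c * ival v₁ x.val - b * ival v₂ x.val :=
      oddpart _ m₀ (by linear_combination c * g1' - b * g2') f1
    have D2 : (a*c - b^2) ∣ a * ival v₂ x.val - b * ival v₁ x.val :=
      oddpart _ n₀ (by linear_combination a * g2' - b * g1') f2
    have hxlat := lat_of x.val x.2 D1 D2
    have hv0 : ξ.val = 0 := by
      rw [← hxeq]
      exact (QuotientAddGroup.eq_zero_iff _).mpr hxlat
    exact Subtype.ext hv0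
  · -- surjectivity
    intro τ
    obtain ⟨z₁, hz₁⟩ := ZMod.intCast_surjective τ.1
    obtain ⟨z₂, hz₂⟩ := ZMod.intCast_surjective τ.2
    obtain ⟨u, w, hs1, hs2⟩ := hsurj z₁ z₂
    obtain ⟨x, hxd, hx1, hx2⟩ := dual_of (m*u) (m*w)
    have hUx : ival v₁ x = m*u := by
      have := hU x hxd; rw [hx1] at this; exact_mod_cast this
    have hWx : ival v₂ x = m*w := by
      have := hW x hxd; rw [hx2] at this; exact_mod_cast this
    set xs : ↥(dualLatticeIn L) := ⟨x, hxd⟩ with hxs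
    set ξ₀ : glueGroup L := QuotientAddGroup.mk' N xs with hξ₀
    have hsval : ((2:ℕ)^n • xs).val = ((2:ℚ)^n) • x := by
      have h' : ((2:ℕ)^n • xs).val = (2:ℕ)^n • xs.val := rfl
      rw [h', ← Nat.cast_smul_eq_nsmul ℚ]
      push_cast
      rfl
    have hU2 : ival v₁ ((2:ℕ)^n • xs).val = 2^n * (m*u) := by
      have h1 := hU _ ((2:ℕ)^n • xs).2
      rw [hsval, innerQ4_smul_left, hx1] at h1
      rw [hsval]
      exact_mod_cast h1
    have hW2 : ival v₂ ((2:ℕ)^n • xs).val = 2^n * (m*w) := by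
      have h1 := hW _ ((2:ℕ)^n • xs).2
      rw [hsval, innerQ4_smul_left, hx2] at h1
      rw [hsval]
      exact_mod_cast h1
    have hmm : ((2:ℕ)^n • xs) ∈ N := by
      show ((2:ℕ)^n • xs).val ∈ latticeIn L
      refine lat_of _ ((2:ℕ)^n • xs).2 ?_ ?_
      · rw [hU2, hW2, hm]
        exact ⟨c*u - b*w, by ring⟩
      · rw [hU2, hW2, hm]
        exact ⟨a*w - b*u, by ring⟩
    have h2n0 : (2:ℕ)^n • ξ₀ = 0 := by
      have hz := (QuotientAddGroup.eq_zero_iff ((2:ℕ)^n • xs)).mpr hmm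
      have : QuotientAddGroup.mk' N ((2:ℕ)^n • xs) = (2:ℕ)^n • ξ₀ := by
        rw [hξ₀, map_nsmul]; rfl
      rw [← this]
      exact hz
    have hmemP : ξ₀ ∈ AddCommGroup.primaryComponent (glueGroup L) 2 := by
      have hdvd := addOrderOf_dvd_of_nsmul_eq_zero h2n0
      obtain ⟨k', _, hk'⟩ := (Nat.dvd_prime_pow Nat.prime_two).mp hdvd
      exact ⟨n, h2n0⟩
    refine ⟨⟨ξ₀, hmemP⟩, ?_⟩
    have happ : χres ⟨ξ₀, hmemP⟩ = χ xs := by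
      show χbar ξ₀ = χ xs
      rw [hξ₀]
      exact QuotientAddGroup.lift_mk' N hkill xs
    rw [happ]
    have hval : χ xs = (((m' * (s * (m*u) + t * (m*w)) : ℤ) : ZMod 2),
        ((m' * (p * (m*u) + q * (m*w)) : ℤ) : ZMod (2^(n-1)))) := by
      rw [hχapp xs]
      rw [show ival v₁ xs.val = m*u from hUx, show ival v₂ xs.val = m*w from hWx]
    rw [hval]
    have hc2 : (2:ℤ) ∣ m * m' - 1 := dvd_trans (dvd_pow_self 2 (by omega : n ≠ 0)) hm'
    have hcp : (2:ℤ)^(n-1) ∣ m * m' - 1 := dvd_trans (pow_dvd_pow 2 (by omega : n-1 ≤ n)) hm'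
    refine Prod.ext ?_ ?_
    · show ((m' * (s * (m*u) + t * (m*w)) : ℤ) : ZMod 2) = τ.1
      rw [← hz₁]
      rw [show ((z₁ : ℤ) : ZMod 2) = ((z₁ : ℤ) : ZMod 2) from rfl]
      rw [← sub_eq_zero, ← Int.cast_sub, cast2]
      have e : m' * (s * (m*u) + t * (m*w)) - z₁
          = (m * m' - 1) * (s*u + t*w) + (s*u + t*w - z₁) := by ring
      rw [e]
      exact dvd_add (Dvd.dvd.mul_right hc2 _) hs1
    · show ((m' * (p * (m*u) + q * (m*w)) : ℤ) : ZMod (2^(n-1))) = τ.2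
      rw [← hz₂]
      rw [← sub_eq_zero, ← Int.cast_sub, castp]
      have e : m' * (p * (m*u) + q * (m*w)) - z₂
          = (m * m' - 1) * (p*u + q*w) + (p*u + q*w - z₂) := by ring
      rw [e]
      exact dvd_add (Dvd.dvd.mul_right hcp _) hs2

end S17
namespace S17

lemma castEq (nn : ℕ) (x y : ℤ) : ((x : ZMod nn) = (y : ZMod nn)) ↔ (nn:ℤ) ∣ (x - y) := by
  rw [← sub_eq_zero, ← Int.cast_sub, ZMod.intCast_zmod_eq_zero_iff_dvd]

lemma dvd2_iff (z : ℤ) : (2:ℤ) ∣ z ↔ ((z : ZMod 2) = 0) := by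
  rw [ZMod.intCast_zmod_eq_zero_iff_dvd]; norm_num

lemma dvd4_iff (z : ℤ) : (4:ℤ) ∣ z ↔ ((z : ZMod 4) = 0) := by
  rw [ZMod.intCast_zmod_eq_zero_iff_dvd]; norm_num

lemma odd_zmod2 {z : ℤ} (h : ¬ (2:ℤ) ∣ z) : (z : ZMod 2) = 1 := by
  have h0 : (z : ZMod 2) ≠ 0 := fun hc => h ((dvd2_iff z).mpr hc)
  revert h0
  have : ∀ x : ZMod 2, x ≠ 0 → x = 1 := by decide
  exact this _

lemma two_mul_zmod4 (z : ℤ) : 2*(z : ZMod 4) = 0 ↔ (2:ℤ) ∣ z := by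
  rw [show (2 : ZMod 4) * (z : ZMod 4) = ((2*z : ℤ) : ZMod 4) by push_cast; ring,
    ZMod.intCast_zmod_eq_zero_iff_dvd]
  omega

lemma dvd2_zmod4 (z : ℤ) : (2:ℤ) ∣ z ↔ 2*(z : ZMod 4) = 0 := (two_mul_zmod4 z).symm

lemma odd2_zmod4 {z : ℤ} (h : ¬ (2:ℤ) ∣ z) : ((2*z : ℤ) : ZMod 4) = 2 := by
  rw [show (2 : ZMod 4) = ((2:ℤ) : ZMod 4) by norm_num, castEq]
  omega

lemma dvd4_two (z : ℤ) : (4:ℤ) ∣ 2*z ↔ 2 ∣ z := by omega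

lemma dvd8_two (z : ℤ) : (8:ℤ) ∣ 2*z ↔ 4 ∣ z := by omega

lemma odd_sq_sub_one (a : ℤ) (h : ¬ (2:ℤ) ∣ a) : (2:ℤ) ∣ a*a - 1 := by
  obtain ⟨r, hr⟩ : ∃ r, a = 2*r+1 := ⟨a/2, by omega⟩
  exact ⟨2*r*r+2*r, by rw [hr]; ring⟩

end S17
/-- Let `L` be a 2-dimensional `ℚ`-subspace of `ℚ⁴` with lattice
`Λ = L ∩ ℤ⁴` and discriminant `D`, where `D mod 16 ∉ {0, 7, 12, 15}` and `n = v₂(D) ≥ 1`.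
Then the `2`-primary part of the glue group `𝒢(Λ) = Λ*/Λ` is isomorphic to
`(ℤ/2ℤ) × (ℤ/2^(n-1)ℤ)`. -/
theorem stmt_17 (L : Submodule ℚ (Fin 4 → ℚ)) (hdim : Module.finrank ℚ L = 2)
    (D : ℕ) (hdisc : ∃ v₁ v₂ : Fin 4 → ℚ, IsZBasisOf L v₁ v₂ ∧ gramDet v₁ v₂ = D)
    (hD : D % 16 ∉ ({0, 7, 12, 15} : Set ℕ))
    (n : ℕ) (hn : (n : ℕ∞) = emultiplicity 2 D) (hn1 : 1 ≤ n) :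
    Nonempty ((AddCommGroup.primaryComponent (glueGroup L) 2) ≃+
      (ZMod 2 × ZMod (2 ^ (n - 1)))) := by
  obtain ⟨v₁, v₂, hbasis, hgram⟩ := hdisc
  choose e₁ he₁ using hbasis.2.2.1
  choose e₂ he₂ using hbasis.2.2.2.1
  set a := S17.dotZ e₁ e₁ with hadef
  set b := S17.dotZ e₁ e₂ with hbdef
  set c := S17.dotZ e₂ e₂ with hcdef
  have hia : innerQ4 v₁ v₁ = (a:ℚ) := by
    rw [hadef]; unfold innerQ4 S17.dotZ
    push_cast
    exact Finset.sum_congr rfl fun i _ => by rw [he₁ i]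
  have hib : innerQ4 v₁ v₂ = (b:ℚ) := by
    rw [hbdef]; unfold innerQ4 S17.dotZ
    push_cast
    exact Finset.sum_congr rfl fun i _ => by rw [he₁ i, he₂ i]
  have hic : innerQ4 v₂ v₂ = (c:ℚ) := by
    rw [hcdef]; unfold innerQ4 S17.dotZ
    push_cast
    exact Finset.sum_congr rfl fun i _ => by rw [he₂ i]
  have hDeq : a*c - b^2 = (D:ℤ) := by
    rw [gramDet, hia, hib, hic] at hgram
    exact_mod_cast hgram
  have hD16 : D % 16 ≠ 0 ∧ D % 16 ≠ 7 ∧ D % 16 ≠ 12 ∧ D % 16 ≠ 15 := by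
    simp only [Set.mem_insert_iff, Set.mem_singleton_iff, not_or] at hD
    exact ⟨hD.1, hD.2.1, hD.2.2.1, hD.2.2.2⟩
  have hmul : 2^n ∣ D ∧ ¬ 2^(n+1) ∣ D := emultiplicity_eq_coe.mp hn.symm
  have hn3 : n ≤ 3 := by
    by_contra hcon
    push_neg at hcon
    obtain ⟨k, hk⟩ := dvd_trans (pow_dvd_pow 2 (show 4 ≤ n by omega)) hmul.1
    have : D % 16 = 0 := by rw [hk]; norm_num [Nat.mul_mod_right]
    exact hD16.1 this
  set mN : ℕ := D / 2^n with hmNdef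
  have hDm : D = 2^n * mN := (Nat.mul_div_cancel' hmul.1).symm
  have hmoddN : ¬ 2 ∣ mN := by
    intro h2
    obtain ⟨k, hk⟩ := h2
    exact hmul.2 ⟨k, by rw [hDm, hk]; ring⟩
  have hmoddZ : ¬ (2:ℤ) ∣ (mN:ℤ) := by
    intro h; exact hmoddN (by exact_mod_cast h)
  have hcop : Nat.Coprime mN (2^n) :=
    Nat.Coprime.pow_right n
      (((Nat.prime_two.coprime_iff_not_dvd).mpr hmoddN).symm)
  have hm' : (2:ℤ)^n ∣ (mN:ℤ) * (Nat.gcdA mN (2^n)) - 1 := by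
    have hbez := Nat.gcd_eq_gcd_ab mN (2^n)
    have hg : (Nat.gcd mN (2^n) : ℤ) = 1 := by exact_mod_cast hcop
    rw [hg] at hbez
    refine ⟨-(Nat.gcdB mN (2^n)), ?_⟩
    push_cast at hbez ⊢
    linarith
  have hmz : a*c - b^2 = 2^n * (mN:ℤ) := by
    rw [hDeq]
    exact_mod_cast congrArg (fun x : ℕ => (x:ℤ)) hDm
  have hprim := S17.prim hbasis e₁ e₂ he₁ he₂
  interval_cases n
  · -- n = 1
    refine S17.core L hdim v₁ v₂ hbasis a b c hia hib hic 1 le_rfl (mN:ℤ)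
      (Nat.gcdA mN (2^1)) hmz hmoddZ hm' c a 0 0 ?_ ?_
    · intro u w
      have h0 : ((a*c - b^2 : ℤ) : ZMod 2) = 0 := by
        rw [hmz]
        rw [show ((2^1*(mN:ℤ) : ℤ) : ZMod 2) = 2*((mN:ℤ) : ZMod 2) by push_cast; ring]
        rw [show (2 : ZMod 2) = 0 from rfl]
        ring
      have hdet : ((a : ZMod 2)) * (c : ZMod 2) - (b : ZMod 2)^2 = 0 := by
        push_cast at h0; exact h0
      simp only [show (1-1 : ℕ) = 0 from rfl, pow_zero, pow_one, one_dvd, and_true]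
      rw [S17.dvd2_iff, S17.dvd2_iff, S17.dvd2_iff]
      push_cast
      exact S17.T1 (a : ZMod 2) (b : ZMod 2) (c : ZMod 2) (u : ZMod 2) (w : ZMod 2) hdet
    · intro z₁ z₂
      rcases em ((2:ℤ) ∣ a) with ha | ha
      · rcases em ((2:ℤ) ∣ c) with hc | hc
        · exfalso
          have h2b : (2:ℤ) ∣ b := by
            obtain ⟨x, hx⟩ := ha
            have hsq : (2:ℤ) ∣ b^2 := ⟨x*c - (mN:ℤ), by linear_combination -hmz + c*hx⟩
            exact Int.prime_two.dvd_of_dvd_pow hsq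
          obtain ⟨x, hx⟩ := ha
          obtain ⟨y, hy⟩ := h2b
          obtain ⟨z, hz⟩ := hc
          have hmn2 : (2:ℤ)*(mN:ℤ) = 2*(2*(x*z - y^2)) := by
            rw [show (2:ℤ)*(mN:ℤ) = 2^1*(mN:ℤ) by ring, ← hmz, hx, hy, hz]; ring
          exact hmoddZ ⟨x*z - y^2, mul_left_cancel₀ two_ne_zero hmn2⟩
        · refine ⟨c*z₁, 0, ?_, ?_⟩
          · rw [show c*(c*z₁) + a*0 - z₁ = (c*c - 1)*z₁ by ring]
            exact Dvd.dvd.mul_right (S17.odd_sq_sub_one c hc) z₁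
          · norm_num
      · refine ⟨0, a*z₁, ?_, ?_⟩
        · rw [show c*0 + a*(a*z₁) - z₁ = (a*a - 1)*z₁ by ring]
          exact Dvd.dvd.mul_right (S17.odd_sq_sub_one a ha) z₁
        · norm_num
  · -- n = 2
    have h4D : (4:ℤ) ∣ a*c - b^2 := by rw [hmz]; exact ⟨(mN:ℤ), by ring⟩
    have hdot4 : (4:ℤ) ∣ S17.dotZ e₁ e₁ * S17.dotZ e₂ e₂ - (S17.dotZ e₁ e₂)^2 := by
      rw [← hadef, ← hbdef, ← hcdef]; exact h4D
    obtain ⟨h2a, h2b, h2c⟩ := S17.hard_claim e₁ e₂ hprim hdot4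
    rw [← hadef] at h2a
    rw [← hbdef] at h2b
    rw [← hcdef] at h2c
    obtain ⟨a₀, ha₀⟩ := h2a
    obtain ⟨b₀, hb₀⟩ := h2b
    obtain ⟨c₀, hc₀⟩ := h2c
    have hdet₀ : a₀*c₀ - b₀^2 = (mN:ℤ) := by
      refine mul_left_cancel₀ (show (4:ℤ) ≠ 0 by norm_num) ?_
      rw [show (4:ℤ)*(a₀*c₀-b₀^2) = (2*a₀)*(2*c₀) - (2*b₀)^2 by ring, ← ha₀, ← hb₀, ← hc₀, hmz]
      ring
    refine S17.core L hdim v₁ v₂ hbasis a b c hia hib hic 2 (by norm_num) (mN:ℤ)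
      (Nat.gcdA mN (2^2)) hmz hmoddZ hm' 1 0 0 1 ?_ ?_
    · intro u w
      have e1 : c*u - b*w = 2*(c₀*u - b₀*w) := by rw [hb₀, hc₀]; ring
      have e2 : a*w - b*u = 2*(a₀*w - b₀*u) := by rw [ha₀, hb₀]; ring
      rw [e1, e2, show (2:ℤ)^2 = 4 by norm_num, S17.dvd4_two, S17.dvd4_two,
        show (2:ℤ)^(2-1) = 2 by norm_num]
      rw [S17.dvd2_iff, S17.dvd2_iff, S17.dvd2_iff, S17.dvd2_iff]
      push_cast
      simp only [one_mul, zero_mul, add_zero, zero_add]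
      have hdet2 : ((a₀ : ZMod 2)) * (c₀ : ZMod 2) - (b₀ : ZMod 2)^2 = 1 := by
        have hh := congrArg (fun z : ℤ => (z : ZMod 2)) hdet₀
        push_cast at hh
        rw [hh]
        exact S17.odd_zmod2 hmoddZ
      exact S17.T2 (a₀ : ZMod 2) (b₀ : ZMod 2) (c₀ : ZMod 2) (u : ZMod 2) (w : ZMod 2) hdet2
    · intro z₁ z₂
      exact ⟨z₁, z₂, ⟨0, by ring⟩, ⟨0, by ring⟩⟩
  · -- n = 3
    have h4D : (4:ℤ) ∣ a*c - b^2 := by rw [hmz]; exact ⟨2*(mN:ℤ), by ring⟩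
    have hdot4 : (4:ℤ) ∣ S17.dotZ e₁ e₁ * S17.dotZ e₂ e₂ - (S17.dotZ e₁ e₂)^2 := by
      rw [← hadef, ← hbdef, ← hcdef]; exact h4D
    obtain ⟨h2a, h2b, h2c⟩ := S17.hard_claim e₁ e₂ hprim hdot4
    rw [← hadef] at h2a
    rw [← hbdef] at h2b
    rw [← hcdef] at h2c
    obtain ⟨a₀, ha₀⟩ := h2a
    obtain ⟨b₀, hb₀⟩ := h2b
    obtain ⟨c₀, hc₀⟩ := h2c
    have hdet₀ : a₀*c₀ - b₀^2 = 2*(mN:ℤ) := by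
      refine mul_left_cancel₀ (show (4:ℤ) ≠ 0 by norm_num) ?_
      rw [show (4:ℤ)*(a₀*c₀-b₀^2) = (2*a₀)*(2*c₀) - (2*b₀)^2 by ring, ← ha₀, ← hb₀, ← hc₀, hmz]
      ring
    have hdet4 : ((a₀ : ZMod 4)) * (c₀ : ZMod 4) - (b₀ : ZMod 4)^2 = 2 := by
      have hh := congrArg (fun z : ℤ => (z : ZMod 4)) hdet₀
      push_cast at hh
      rw [hh]
      have h22 := S17.odd2_zmod4 hmoddZ
      push_cast at h22
      exact h22
    rcases em ((2:ℤ) ∣ a₀) with ha₀e | ha₀o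
    · -- a₀ even; then b₀ even, c₀ odd
      have hb₀e : (2:ℤ) ∣ b₀ := by
        by_contra hb'
        obtain ⟨x, hx⟩ := ha₀e
        have hsq : (2:ℤ) ∣ b₀^2 := ⟨x*c₀ - (mN:ℤ), by linear_combination -hdet₀ + c₀*hx⟩
        exact hb' (Int.prime_two.dvd_of_dvd_pow hsq)
      have hc₀o : ¬ (2:ℤ) ∣ c₀ := by
        intro hc'
        obtain ⟨x, hx⟩ := ha₀e
        obtain ⟨y, hy⟩ := hb₀e
        obtain ⟨z, hz⟩ := hc'
        have h2 : (2:ℤ)*(mN:ℤ) = 2*(2*(x*z - y^2)) := by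
          rw [← hdet₀, hx, hy, hz]; ring
        exact hmoddZ ⟨x*z - y^2, mul_left_cancel₀ two_ne_zero h2⟩
      refine S17.core L hdim v₁ v₂ hbasis a b c hia hib hic 3 (by norm_num) (mN:ℤ)
        (Nat.gcdA mN (2^3)) hmz hmoddZ hm' 0 1 1 (-(c₀*b₀)) ?_ ?_
      · intro u w
        have e1 : c*u - b*w = 2*(c₀*u - b₀*w) := by rw [hb₀, hc₀]; ring
        have e2 : a*w - b*u = 2*(a₀*w - b₀*u) := by rw [ha₀, hb₀]; ring
        rw [e1, e2, show (2:ℤ)^3 = 8 by norm_num, S17.dvd8_two, S17.dvd8_two,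
          show (2:ℤ)^(3-1) = 4 by norm_num]
        rw [show (0:ℤ)*u + 1*w = w by ring, show (1:ℤ)*u + (-(c₀*b₀))*w = u - c₀*b₀*w by ring]
        rw [S17.dvd4_iff, S17.dvd4_iff, S17.dvd4_iff, S17.dvd2_zmod4 w]
        push_cast
        have h2c4 : 2*((c₀ : ZMod 4)) ≠ 0 :=
          fun hc => hc₀o ((S17.two_mul_zmod4 c₀).mp hc)
        have hdet4' : ((c₀ : ZMod 4)) * (a₀ : ZMod 4) - (b₀ : ZMod 4)^2 = 2 := by
          rw [mul_comm]; exact hdet4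
        exact and_comm.trans
          (S17.T3 (c₀ : ZMod 4) (b₀ : ZMod 4) (a₀ : ZMod 4) (w : ZMod 4) (u : ZMod 4) h2c4 hdet4')
      · intro z₁ z₂
        exact ⟨z₂ + c₀*b₀*z₁, z₁, ⟨0, by ring⟩, ⟨0, by ring⟩⟩
    · -- a₀ odd
      refine S17.core L hdim v₁ v₂ hbasis a b c hia hib hic 3 (by norm_num) (mN:ℤ)
        (Nat.gcdA mN (2^3)) hmz hmoddZ hm' 1 0 (-(a₀*b₀)) 1 ?_ ?_
      · intro u w
        have e1 : c*u - b*w = 2*(c₀*u - b₀*w) := by rw [hb₀, hc₀]; ring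
        have e2 : a*w - b*u = 2*(a₀*w - b₀*u) := by rw [ha₀, hb₀]; ring
        rw [e1, e2, show (2:ℤ)^3 = 8 by norm_num, S17.dvd8_two, S17.dvd8_two,
          show (2:ℤ)^(3-1) = 4 by norm_num]
        rw [show (1:ℤ)*u + 0*w = u by ring, show (-(a₀*b₀):ℤ)*u + 1*w = w - a₀*b₀*u by ring]
        rw [S17.dvd4_iff, S17.dvd4_iff, S17.dvd4_iff, S17.dvd2_zmod4 u]
        push_cast
        have h2a4 : 2*((a₀ : ZMod 4)) ≠ 0 :=
          fun hc => ha₀o ((S17.two_mul_zmod4 a₀).mp hc)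
        exact S17.T3 (a₀ : ZMod 4) (b₀ : ZMod 4) (c₀ : ZMod 4) (u : ZMod 4) (w : ZMod 4) h2a4 hdet4
      · intro z₁ z₂
        exact ⟨z₁, z₂ + a₀*b₀*z₁, ⟨0, by ring⟩, ⟨0, by ring⟩⟩
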